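/- Let Γ ⊂ ℝⁿ be an open symmetric convex cone with vertex at the origin containing the positive orthant, and suppose (α,…,α,α−β) ∈ Γ for real constants α, β. Let p ∈ ℝⁿ be nonzero and let B be a symmetric n×n matrix with operator norm ‖B‖ ≤ ε₀ |p|², where ε₀ > 0 is small enough that (α−2ε₀,…,α−2ε₀,α−β−2ε₀) ∈ Γ. Then the eigenvalue vector of α|p|²·I − β·p pᵀ + B lies in Γ. -/

import Mathlib

open scoped Matrix

/-- Let `Γ ⊂ ℝⁿ` be an open symmetric convex cone with vertex at the origin
containing the positive orthant, with `(α,…,α,α−β) ∈ Γ`. If `p ≠ 0`, `ε₀ > 0`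
is such that `(α−2ε₀,…,α−2ε₀,α−β−2ε₀) ∈ Γ`, and `B` is symmetric with
`−ε₀|p|²·I ≤ B ≤ ε₀|p|²·I`, then the eigenvalue vector of
`α|p|²·I − β·p pᵀ + B` lies in `Γ` (here `|p|² = p ⬝ᵥ p`). -/
theorem eigenvalues_perturbed_in_cone
    (n : ℕ) (Γ : Set (Fin n → ℝ))
    (hopen : IsOpen Γ)
    (hsym : ∀ (σ : Equiv.Perm (Fin n)) (x : Fin n → ℝ), x ∈ Γ → (x ∘ σ) ∈ Γ)
    (hconv : Convex ℝ Γ)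
    (hcone : ∀ (t : ℝ), 0 < t → ∀ x ∈ Γ, t • x ∈ Γ)
    (horthant : ∀ x : Fin n → ℝ, (∀ i, 0 < x i) → x ∈ Γ)
    (α β : ℝ)
    (hαβ : (fun i : Fin n => if (i : ℕ) = n - 1 then α - β else α) ∈ Γ)
    (p : Fin n → ℝ) (hp : p ≠ 0)
    (ε₀ : ℝ) (hε₀ : 0 < ε₀)
    (hsmall : (fun i : Fin n =>
        if (i : ℕ) = n - 1 then α - β - 2 * ε₀ else α - 2 * ε₀) ∈ Γ)
    (B : Matrix (Fin n) (Fin n) ℝ) (hB : B.IsHermitian)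
    (hBub : ((ε₀ * (p ⬝ᵥ p)) • (1 : Matrix (Fin n) (Fin n) ℝ) - B).PosSemidef)
    (hBlb : (B + (ε₀ * (p ⬝ᵥ p)) • (1 : Matrix (Fin n) (Fin n) ℝ)).PosSemidef)
    (M : Matrix (Fin n) (Fin n) ℝ)
    (hMdef : M = (α * (p ⬝ᵥ p)) • (1 : Matrix (Fin n) (Fin n) ℝ)
        - β • Matrix.vecMulVec p p + B)
    (hM : M.IsHermitian) :
    (fun i => hM.eigenvalues i) ∈ Γ := by
  classical
  have npos : 0 < n := by
    rcases Nat.eq_zero_or_pos n with h | h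
    · subst h; exact absurd (Subsingleton.elim p 0) hp
    · exact h
  set pp := p ⬝ᵥ p with hppdef
  have hpp : 0 < pp := by
    have h0 : 0 ≤ pp := Finset.sum_nonneg fun i _ => mul_self_nonneg _
    have hne : pp ≠ 0 := fun h => hp (dotProduct_self_eq_zero.mp h)
    exact lt_of_le_of_ne h0 (Ne.symm hne)
  -- Cauchy-Schwarz
  have hCS : ∀ v : Fin n → ℝ, (p ⬝ᵥ v)^2 ≤ pp * (v ⬝ᵥ v) := by
    intro v
    simpa [hppdef, dotProduct, sq] using Finset.sum_mul_sq_le_sq_mul_sq Finset.univ p v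
  -- bounds on the quadratic form of B
  have hBub' : ∀ v : Fin n → ℝ, v ⬝ᵥ (B *ᵥ v) ≤ (ε₀ * pp) * (v ⬝ᵥ v) := by
    intro v
    have := hBub.dotProduct_mulVec_nonneg v
    simp [Matrix.sub_mulVec, Matrix.smul_mulVec, dotProduct_sub,
      dotProduct_smul, smul_eq_mul] at this
    linarith
  have hBlb' : ∀ v : Fin n → ℝ, -((ε₀ * pp) * (v ⬝ᵥ v)) ≤ v ⬝ᵥ (B *ᵥ v) := by
    intro v
    have := hBlb.dotProduct_mulVec_nonneg v
    simp [Matrix.add_mulVec, Matrix.smul_mulVec, dotProduct_add,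
      dotProduct_smul, smul_eq_mul] at this
    linarith
  -- quadratic form of M
  have hvmv : ∀ v : Fin n → ℝ, (Matrix.vecMulVec p p) *ᵥ v = (p ⬝ᵥ v) • p := by
    intro v
    ext i
    simp [Matrix.mulVec, Matrix.vecMulVec_apply, dotProduct, Finset.mul_sum,
      mul_comm, mul_assoc, smul_eq_mul]
    exact Finset.sum_congr rfl fun j _ => by ring
  have hQ : ∀ v : Fin n → ℝ, v ⬝ᵥ (M *ᵥ v)
      = α * pp * (v ⬝ᵥ v) - β * (p ⬝ᵥ v)^2 + v ⬝ᵥ (B *ᵥ v) := by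
    intro v
    rw [hMdef, Matrix.add_mulVec, Matrix.sub_mulVec, Matrix.smul_mulVec,
      Matrix.one_mulVec, Matrix.smul_mulVec, hvmv, dotProduct_add,
      dotProduct_sub, dotProduct_smul, dotProduct_smul,
      dotProduct_smul]
    have hc : v ⬝ᵥ p = p ⬝ᵥ v := dotProduct_comm v p
    simp [smul_eq_mul, hc]
    try ring
    try exact Or.inl trivial
  -- eigenvector basis
  set lam : Fin n → ℝ := hM.eigenvalues with hlam
  set v : Fin n → (Fin n → ℝ) := fun i => ⇑(hM.eigenvectorBasis i) with hv
  have hnormv : ∀ i, v i ⬝ᵥ v i = 1 := by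
    intro i
    have h := hM.eigenvectorBasis.orthonormal
    have h1 := h.1 i
    rw [@norm_eq_sqrt_real_inner] at h1
    have h2 : (inner ℝ (hM.eigenvectorBasis i) (hM.eigenvectorBasis i) : ℝ) = 1 := by
      nlinarith [Real.sq_sqrt (real_inner_self_nonneg (x := hM.eigenvectorBasis i)),
        real_inner_self_nonneg (x := hM.eigenvectorBasis i)]
    rw [EuclideanSpace.inner_eq_star_dotProduct] at h2
    simpa [hv, dotProduct] using h2
  have horthv : ∀ i j, i ≠ j → v i ⬝ᵥ v j = 0 := by
    intro i j hij
    have h := hM.eigenvectorBasis.orthonormal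
    have := h.2 hij
    simpa [hv, PiLp.inner_apply, RCLike.inner_apply, dotProduct, mul_comm] using this
  have hmulv : ∀ i, M *ᵥ v i = lam i • v i := fun i => hM.mulVec_eigenvectorBasis i
  have heig : ∀ i, v i ⬝ᵥ (M *ᵥ v i) = lam i := by
    intro i
    rw [hmulv i, dotProduct_smul, smul_eq_mul, hnormv i, mul_one]
  -- lower bound for all eigenvalues
  have hlow : ∀ i, (α - max β 0 - ε₀) * pp ≤ lam i := by
    intro i
    have h1 := hQ (v i)
    rw [heig i, hnormv i] at h1
    have hcs := hCS (v i); rw [hnormv i] at hcs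
    have hb := hBlb' (v i); rw [hnormv i] at hb
    have hsq : 0 ≤ (p ⬝ᵥ v i)^2 := sq_nonneg _
    rcases le_or_gt 0 β with hβ | hβ
    · have : max β 0 = β := max_eq_left hβ
      rw [this]; nlinarith
    · have : max β 0 = 0 := max_eq_right hβ.le
      rw [this]; nlinarith
  -- at most one eigenvalue can be ≤ (α - 2ε₀)pp
  have huniq : ∀ i j, i ≠ j → lam i ≤ (α - 2*ε₀) * pp → lam j ≤ (α - 2*ε₀) * pp → False := by
    intro i j hij hli hlj
    obtain ⟨a, b, hpw, hs⟩ : ∃ a b : ℝ, a * (p ⬝ᵥ v i) + b * (p ⬝ᵥ v j) = 0 ∧ 0 < a^2 + b^2 := by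
      by_cases hci : p ⬝ᵥ v i = 0
      · exact ⟨1, 0, by simp [hci], by norm_num⟩
      · exact ⟨p ⬝ᵥ v j, -(p ⬝ᵥ v i), by ring, by nlinarith [sq_nonneg (p ⬝ᵥ v j), mul_self_pos.mpr hci]⟩
    set w : Fin n → ℝ := a • v i + b • v j with hwdef
    have hww : w ⬝ᵥ w = a^2 + b^2 := by
      simp [hwdef, add_dotProduct, dotProduct_add, smul_dotProduct,
        dotProduct_smul, smul_eq_mul, hnormv i, hnormv j, horthv i j hij,
        horthv j i hij.symm]
      ring
    have hpw' : p ⬝ᵥ w = 0 := by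
      simp [hwdef, dotProduct_add, dotProduct_smul, smul_eq_mul]
      linarith [hpw]
    have hMw : w ⬝ᵥ (M *ᵥ w) = a^2 * lam i + b^2 * lam j := by
      have hm : M *ᵥ w = (a * lam i) • v i + (b * lam j) • v j := by
        rw [hwdef, Matrix.mulVec_add, Matrix.mulVec_smul, Matrix.mulVec_smul,
          hmulv i, hmulv j, smul_smul, smul_smul]
      rw [hm, hwdef]
      simp [add_dotProduct, dotProduct_add, smul_dotProduct,
        dotProduct_smul, smul_eq_mul, hnormv i, hnormv j, horthv i j hij,
        horthv j i hij.symm]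
      ring
    have h1 := hQ w
    rw [hMw, hww, hpw'] at h1
    have h2 := hBlb' w; rw [hww] at h2
    nlinarith [mul_pos hpp hs, mul_le_mul_of_nonneg_left hli (sq_nonneg a),
      mul_le_mul_of_nonneg_left hlj (sq_nonneg b), mul_pos hε₀ (mul_pos hpp hs)]
  -- some eigenvalue exceeds (α - β - 2ε₀)pp
  have hmax : ∃ j, (α - β - 2*ε₀) * pp < lam j := by
    by_contra hcon
    push_neg at hcon
    -- spectral decomposition of the Rayleigh quotient at p
    obtain ⟨q, hqq, hpmp⟩ : ∃ q : Fin n → ℝ, q ⬝ᵥ q = pp ∧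
        p ⬝ᵥ (M *ᵥ p) = ∑ i, lam i * (q i)^2 := by
      set U : Matrix (Fin n) (Fin n) ℝ := (hM.eigenvectorUnitary : Matrix (Fin n) (Fin n) ℝ)
        with hU
      have hmem := hM.eigenvectorUnitary.prop
      rw [Matrix.mem_unitaryGroup_iff] at hmem
      set q : Fin n → ℝ := star U *ᵥ p with hq
      have hstar : star U = Uᵀ := by
        rw [Matrix.star_eq_conjTranspose, Matrix.conjTranspose]
        ext i j; simp [Matrix.transpose]
      have key : ∀ x : Fin n → ℝ, p ⬝ᵥ (U *ᵥ x) = q ⬝ᵥ x := by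
        intro x
        rw [Matrix.dotProduct_mulVec, hq, hstar, ← Matrix.vecMul_transpose,
          Matrix.transpose_transpose]
      refine ⟨q, ?_, ?_⟩
      · have h3 : p ⬝ᵥ (U *ᵥ q) = q ⬝ᵥ q := key q
        rw [hq, Matrix.mulVec_mulVec, hmem, Matrix.one_mulVec] at h3
        exact h3.symm
      · conv_lhs => rw [hM.spectral_theorem, Unitary.conjStarAlgAut_apply]
        rw [← hU, Matrix.mul_assoc, ← Matrix.mulVec_mulVec, key, ← Matrix.mulVec_mulVec, ← hq]
        simp [dotProduct, Matrix.mulVec_diagonal]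
        exact Finset.sum_congr rfl fun i _ => by ring
    have hqsum : q ⬝ᵥ q = ∑ i, (q i)^2 := by
      simp [dotProduct, sq]
    have h1 := hQ p
    rw [hpmp] at h1
    have h2 := hBlb' p
    have h3 : ∑ i, lam i * (q i)^2 ≤ (α - β - 2*ε₀) * pp * pp := by
      calc ∑ i, lam i * (q i)^2
          ≤ ∑ i, ((α - β - 2*ε₀) * pp) * (q i)^2 :=
            Finset.sum_le_sum fun i _ => mul_le_mul_of_nonneg_right (hcon i) (sq_nonneg _)
        _ = ((α - β - 2*ε₀) * pp) * ∑ i, (q i)^2 := by rw [Finset.mul_sum]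
        _ = (α - β - 2*ε₀) * pp * pp := by rw [← hqsum, hqq]
    nlinarith [sq_nonneg pp, mul_pos hpp hpp, mul_pos hε₀ (mul_pos hpp hpp)]
  -- choose the distinguished index
  obtain ⟨j, hj, hother⟩ : ∃ j : Fin n, (α - β - 2*ε₀) * pp < lam j ∧
      ∀ i, i ≠ j → (α - 2*ε₀) * pp < lam i := by
    rcases le_or_gt 0 β with hb | hb
    · by_cases hex : ∃ i, lam i ≤ (α - 2*ε₀) * pp
      · obtain ⟨j, hjle⟩ := hex
        refine ⟨j, ?_, fun i hi => ?_⟩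
        · have hl := hlow j
          have hmb : max β 0 = β := max_eq_left hb
          rw [hmb] at hl
          nlinarith
        · by_contra hle
          push_neg at hle
          exact huniq i j hi hle hjle
      · push_neg at hex
        refine ⟨⟨0, npos⟩, ?_, fun i _ => hex i⟩
        have := hex ⟨0, npos⟩
        nlinarith
    · obtain ⟨j, hj⟩ := hmax
      refine ⟨j, hj, fun i _ => ?_⟩
      have hl := hlow i
      have hmb : max β 0 = 0 := max_eq_right hb.le
      rw [hmb] at hl
      nlinarith
  -- assemble the membership
  set last : Fin n := ⟨n - 1, by omega⟩ with hlast
  set σ : Equiv.Perm (Fin n) := Equiv.swap j last with hσ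
  set w0 : Fin n → ℝ := fun i => if (i : ℕ) = n - 1 then α - β - 2 * ε₀ else α - 2 * ε₀
    with hw0
  have hw0σ : (w0 ∘ σ) ∈ Γ := hsym σ w0 hsmall
  have hwΓ : (pp • (w0 ∘ σ)) ∈ Γ := hcone pp hpp _ hw0σ
  have hval : ∀ i : Fin n, ((i : ℕ) = n - 1) ↔ i = last := by
    intro i
    constructor
    · intro h; exact Fin.ext h
    · intro h; rw [h]
  have hd : ∀ i, 0 < lam i - pp * w0 (σ i) := by
    intro i
    by_cases hij : i = j
    · subst hij
      have hσi : σ i = last := Equiv.swap_apply_left _ _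
      have : w0 (σ i) = α - β - 2 * ε₀ := by
        rw [hσi, hw0]; simp [hlast]
      rw [this]
      nlinarith
    · have hσi : σ i ≠ last := by
        intro h
        apply hij
        have := congrArg σ h
        rw [hσ] at this
        simpa [Equiv.swap_apply_self, Equiv.swap_apply_right] using this
      have : w0 (σ i) = α - 2 * ε₀ := by
        rw [hw0]
        simp only
        rw [if_neg]
        intro h
        exact hσi ((hval (σ i)).mp h)
      rw [this]
      have := hother i hij
      nlinarith
  set d : Fin n → ℝ := fun i => lam i - pp * w0 (σ i) with hddef
  have hdΓ : d ∈ Γ := horthant d hd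
  have hmid := hconv hwΓ hdΓ (by norm_num : (0:ℝ) ≤ 1/2) (by norm_num : (0:ℝ) ≤ 1/2)
    (by norm_num)
  have hfinal := hcone 2 (by norm_num) _ hmid
  have heq : (2:ℝ) • ((1/2 : ℝ) • (pp • (w0 ∘ σ)) + (1/2 : ℝ) • d) = fun i => lam i := by
    funext i
    simp [hddef, Pi.smul_apply, smul_eq_mul, Function.comp]
    ring
  rw [heq] at hfinal
  exact hfinal
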